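/- arXiv:2405.20753 — 6 statements merged into one kernel-verified Lean document; each statement's English description precedes it below -/
import Mathlib

section
/- Let B be a strong bimonoid. Then the following two statements are equivalent: (A) B is locally finite; (B) for each ranked alphabet Σ and for each (Σ,B)-weighted tree automaton 𝒜, the set im(⟦𝒜⟧_init) is finite. -/
/-- A strong bimonoid: `(B,+,0)` a commutative monoid, `(B,*,1)` a monoid,
and `0` annihilating for `*`. -/
class StrongBimonoid (B : Type*) extends AddCommMonoid B, MonoidWithZero B

section Defs

variable {B : Type*} [StrongBimonoid B]

/-- The closure `⟨A⟩_{⊕,⊗,0,1}` of a subset `A`: the smallest subset of `B`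
containing `A ∪ {0,1}` and closed under `+` and `*`. -/
inductive SBClosure (A : Set B) : B → Prop
  | base {a : B} : a ∈ A → SBClosure A a
  | zero : SBClosure A 0
  | one : SBClosure A 1
  | add {a b : B} : SBClosure A a → SBClosure A b → SBClosure A (a + b)
  | mul {a b : B} : SBClosure A a → SBClosure A b → SBClosure A (a * b)

/-- `B` is locally finite if the closure of each finite subset is finite. -/
def SBLocallyFinite (B : Type*) [StrongBimonoid B] : Prop :=
  ∀ A : Set B, A.Finite → {b : B | SBClosure A b}.Finite

/-- The weak closure `wcl(A)`: the smallest subset containing `A ∪ {0,1}` closed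
under addition and under multiplication on the right by elements of `A`. -/
inductive WeakClosure (A : Set B) : B → Prop
  | base {a : B} : a ∈ A → WeakClosure A a
  | zero : WeakClosure A 0
  | one : WeakClosure A 1
  | add {b b' : B} : WeakClosure A b → WeakClosure A b' → WeakClosure A (b + b')
  | mulr {b a : B} : WeakClosure A b → a ∈ A → WeakClosure A (b * a)

/-- `B` is weakly locally finite if the weak closure of each finite subset is finite. -/
def WeaklyLocallyFinite (B : Type*) [StrongBimonoid B] : Prop :=
  ∀ A : Set B, A.Finite → {b : B | WeakClosure A b}.Finite

/-- `B` is additively locally finite if each finitely generated submonoid of `(B,+,0)` is finite. -/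
def AddLocallyFinite (B : Type*) [StrongBimonoid B] : Prop :=
  ∀ A : Set B, A.Finite → ((AddSubmonoid.closure A : AddSubmonoid B) : Set B).Finite

/-- `B` is multiplicatively locally finite if each finitely generated submonoid of `(B,*,1)` is finite. -/
def MulLocallyFinite (B : Type*) [StrongBimonoid B] : Prop :=
  ∀ A : Set B, A.Finite → ((Submonoid.closure A : Submonoid B) : Set B).Finite

/-- `B` is bi-locally finite if it is additively and multiplicatively locally finite. -/
def BiLocallyFinite (B : Type*) [StrongBimonoid B] : Prop :=
  AddLocallyFinite B ∧ MulLocallyFinite B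

/-- `B` is almost idempotent if `b + b + b = b + b` for all `b`. -/
def AlmostIdempotent (B : Type*) [StrongBimonoid B] : Prop :=
  ∀ b : B, b + b + b = b + b

/-- right-distributivity -/
def SBRightDistributive (B : Type*) [StrongBimonoid B] : Prop :=
  ∀ a b c : B, (a + b) * c = a * c + b * c

/-- left-distributivity -/
def SBLeftDistributive (B : Type*) [StrongBimonoid B] : Prop :=
  ∀ a b c : B, a * (b + c) = a * b + a * c

end Defs

/-- A ranked alphabet: a finite nonempty set of symbols with a rank map,
having at least one nullary symbol. -/
structure RankedAlphabet where
  symb : Type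
  fintype_symb : Fintype symb
  nonempty_symb : Nonempty symb
  rk : symb → ℕ
  exists_nullary : ∃ σ, rk σ = 0

attribute [instance] RankedAlphabet.fintype_symb RankedAlphabet.nonempty_symb

/-- Trees (ground terms) over a ranked alphabet. -/
inductive RTree (S : RankedAlphabet) : Type
  | node (σ : S.symb) (ts : Fin (S.rk σ) → RTree S) : RTree S

/-- A weighted tree automaton over the ranked alphabet `S` and the strong bimonoid `B`. -/
structure WTA (S : RankedAlphabet) (B : Type) [StrongBimonoid B] where
  Q : Type
  fintypeQ : Fintype Q
  nonemptyQ : Nonempty Q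
  δ : (σ : S.symb) → (Fin (S.rk σ) → Q) → Q → B
  F : Q → B

attribute [instance] WTA.fintypeQ WTA.nonemptyQ

variable {S : RankedAlphabet} {B : Type} [StrongBimonoid B]

/-- The vector `h_𝒜(t) ∈ B^Q`:
`h_𝒜(σ(t_1,…,t_k))_q = ⊕_{q_1⋯q_k ∈ Q^k} (⊗_i h_𝒜(t_i)_{q_i}) ⊗ δ_k(q_1⋯q_k,σ,q)`. -/
def WTA.h (M : WTA S B) : RTree S → M.Q → B
  | .node σ ts => fun q =>
      ∑ qs : Fin (S.rk σ) → M.Q,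
        (((List.finRange (S.rk σ)).map (fun i => M.h (ts i) (qs i))).prod) * M.δ σ qs q

/-- The initial algebra semantics `⟦𝒜⟧_init(t) = ⊕_{q ∈ Q} h_𝒜(t)_q ⊗ F_q`. -/
noncomputable def WTA.initSem (M : WTA S B) (t : RTree S) : B :=
  ∑ q, M.h t q * M.F q


section Proof

variable {B : Type} [StrongBimonoid B]

lemma SBClosure.finsetSum {A : Set B} {ι : Type*} (s : Finset ι) (f : ι → B)
    (h : ∀ i ∈ s, SBClosure A (f i)) : SBClosure A (∑ i ∈ s, f i) := by
  classical
  induction s using Finset.induction with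
  | empty => simpa using SBClosure.zero
  | @insert x s hx ih =>
      rw [Finset.sum_insert hx]
      exact .add (h _ (by simp)) (ih fun i hi => h i (by simp [hi]))

lemma SBClosure.listProd {A : Set B} (l : List B) (h : ∀ b ∈ l, SBClosure A b) :
    SBClosure A l.prod := by
  induction l with
  | nil => simpa using SBClosure.one
  | cons a l ih =>
      simpa using SBClosure.mul (h a (by simp)) (ih fun b hb => h b (by simp [hb]))

/-- The finite set of weights occurring in a wta. -/
def wtaWeights {S : RankedAlphabet} (M : WTA S B) : Set B :=
  Set.range (fun p : Σ σ : S.symb, (Fin (S.rk σ) → M.Q) × M.Q => M.δ p.1 p.2.1 p.2.2) ∪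
    Set.range M.F

lemma wtaWeights_finite {S : RankedAlphabet} (M : WTA S B) : (wtaWeights M).Finite :=
  (Set.finite_range _).union (Set.finite_range _)

lemma h_mem_closure {S : RankedAlphabet} (M : WTA S B) (t : RTree S) (q : M.Q) :
    SBClosure (wtaWeights M) (M.h t q) := by
  induction t generalizing q with
  | node σ ts ih =>
      rw [WTA.h]
      refine SBClosure.finsetSum _ _ fun qs _ => SBClosure.mul ?_ ?_
      · refine SBClosure.listProd _ fun b hb => ?_
        obtain ⟨i, -, rfl⟩ := List.mem_map.mp hb
        exact ih i (qs i)
      · exact .base (Or.inl ⟨⟨σ, qs, q⟩, rfl⟩)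

lemma initSem_mem_closure {S : RankedAlphabet} (M : WTA S B) (t : RTree S) :
    SBClosure (wtaWeights M) (M.initSem t) := by
  refine SBClosure.finsetSum _ _ fun q _ => SBClosure.mul (h_mem_closure M t q) ?_
  exact .base (Or.inr ⟨q, rfl⟩)

/-- The ranked alphabet for the converse construction. -/
def constructS (A : Finset B) : RankedAlphabet where
  symb := (Bool ⊕ {x // x ∈ A}) ⊕ Bool
  fintype_symb := by infer_instance
  nonempty_symb := ⟨Sum.inr true⟩
  rk := Sum.elim (fun _ => 0) (fun _ => 2)
  exists_nullary := ⟨Sum.inl (Sum.inl true), rfl⟩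

/-- Transition weight for nullary symbols. -/
def deltaNul (A : Finset B) (c : Bool ⊕ {x // x ∈ A}) (q : Bool) : B :=
  if q then (match c with
    | Sum.inl false => (0 : B)
    | Sum.inl true => 1
    | Sum.inr a => (a : B)) else 1

/-- Transition weight for binary symbols. -/
def deltaBin (b : Bool) (qs : Fin 2 → Bool) (q : Bool) : B :=
  if q then
    (if b then (if qs 0 = true ∧ qs 1 = true then (1 : B) else 0)
     else (if (qs 0 = true ∧ qs 1 = false) ∨ (qs 0 = false ∧ qs 1 = true)
           then (1 : B) else 0))
  else (if qs 0 = false ∧ qs 1 = false then (1 : B) else 0)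

/-- The wta for the converse construction. -/
def constructM (A : Finset B) : WTA (constructS A) B where
  Q := Bool
  fintypeQ := inferInstance
  nonemptyQ := inferInstance
  δ := fun σ => match σ with
    | Sum.inl c => fun _ q => deltaNul A c q
    | Sum.inr b => fun qs q => deltaBin b qs q
  F := fun q => if q then 1 else 0

lemma delta_inl (A : Finset B) (c : Bool ⊕ {x // x ∈ A}) (qs : Fin 0 → Bool) (q : Bool) :
    (constructM A).δ (Sum.inl c) qs q = deltaNul A c q := rfl

lemma delta_inr (A : Finset B) (b : Bool) (qs : Fin 2 → Bool) (q : Bool) :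
    (constructM A).δ (Sum.inr b) qs q = deltaBin b qs q := rfl

lemma sum_fin0 {C : Type} [AddCommMonoid C] (f : (Fin 0 → Bool) → C) :
    ∑ qs : Fin 0 → Bool, f qs = f default := by
  rw [Fintype.sum_unique]
  exact congrArg f (Subsingleton.elim _ _)

lemma sum_fin2 {C : Type} [AddCommMonoid C] (f : (Fin 2 → Bool) → C) :
    ∑ qs : Fin 2 → Bool, f qs
      = f ![false,false] + f ![false,true] + f ![true,false] + f ![true,true] := by
  rw [← (finTwoArrowEquiv Bool).symm.sum_comp, Fintype.sum_prod_type]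
  simp [Fintype.sum_bool, finTwoArrowEquiv]
  abel

lemma prod_fin2 {C : Type} [Monoid C] (f : Fin 2 → C) :
    ((List.finRange 2).map f).prod = f 0 * f 1 := by
  simp [List.finRange_succ]

lemma h_node0 (A : Finset B) (c : Bool ⊕ {x // x ∈ A}) (ts : Fin 0 → RTree (constructS A))
    (q : Bool) :
    (constructM A).h (.node (Sum.inl c) ts) q = deltaNul A c q := by
  unfold WTA.h
  show (∑ qs : Fin 0 → Bool,
      ((List.finRange 0).map (fun i => (constructM A).h (ts i) (qs i))).prod *
        (constructM A).δ (Sum.inl c) qs q) = _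
  rw [sum_fin0]
  simp [delta_inl]

lemma h_node2 (A : Finset B) (b : Bool) (ts : Fin 2 → RTree (constructS A)) (q : Bool) :
    (constructM A).h (.node (Sum.inr b) ts) q =
      (constructM A).h (ts 0) false * (constructM A).h (ts 1) false * deltaBin b ![false,false] q +
      (constructM A).h (ts 0) false * (constructM A).h (ts 1) true * deltaBin b ![false,true] q +
      (constructM A).h (ts 0) true * (constructM A).h (ts 1) false * deltaBin b ![true,false] q +
      (constructM A).h (ts 0) true * (constructM A).h (ts 1) true * deltaBin b ![true,true] q := by
  erw [WTA.h.eq_1]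
  show (∑ qs : Fin 2 → Bool,
      ((List.finRange 2).map (fun i => (constructM A).h (ts i) (qs i))).prod *
        (constructM A).δ (Sum.inr b) qs q) = _
  rw [sum_fin2]
  simp [prod_fin2, delta_inr]

lemma h_false (A : Finset B) (t : RTree (constructS A)) :
    (constructM A).h t false = 1 := by
  induction t with
  | node σ ts ih =>
      match σ with
      | Sum.inl c =>
          erw [h_node0]
          simp [deltaNul]
      | Sum.inr b =>
          erw [h_node2]
          simp [deltaBin, ih (0 : Fin 2), ih (1 : Fin 2)]

lemma h_true_surj (A : Finset B) (b : B) (hb : SBClosure (↑A : Set B) b) :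
    ∃ t : RTree (constructS A), (constructM A).h t true = b := by
  induction hb with
  | @base a ha =>
      refine ⟨.node (Sum.inl (Sum.inr ⟨a, by simpa using ha⟩)) (fun i => i.elim0), ?_⟩
      erw [h_node0]; simp [deltaNul]
  | zero =>
      refine ⟨.node (Sum.inl (Sum.inl false)) (fun i => i.elim0), ?_⟩
      erw [h_node0]; simp [deltaNul]
  | one =>
      refine ⟨.node (Sum.inl (Sum.inl true)) (fun i => i.elim0), ?_⟩
      erw [h_node0]; simp [deltaNul]
  | @add b b' _ _ ih ih' =>
      obtain ⟨t, ht⟩ := ih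
      obtain ⟨t', ht'⟩ := ih'
      refine ⟨.node (Sum.inr false) ![t, t'], ?_⟩
      erw [h_node2]
      simp [deltaBin, h_false, ht, ht']
      abel
  | @mul b b' _ _ ih ih' =>
      obtain ⟨t, ht⟩ := ih
      obtain ⟨t', ht'⟩ := ih'
      refine ⟨.node (Sum.inr true) ![t, t'], ?_⟩
      erw [h_node2]
      simp [deltaBin, h_false, ht, ht']

lemma initSem_eq_h_true (A : Finset B) (t : RTree (constructS A)) :
    (constructM A).initSem t = (constructM A).h t true := by
  show ∑ q : Bool, _ = _
  rw [Fintype.sum_bool]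
  simp [constructM]

end Proof

/-- `B` is locally finite iff for every ranked alphabet `Σ` and every wta `𝒜` over
`Σ` and `B`, the image of the initial algebra semantics of `𝒜` is finite. -/
theorem statement7 (B : Type) [StrongBimonoid B] :
    SBLocallyFinite B ↔
      ∀ (S : RankedAlphabet) (M : WTA S B), (Set.range M.initSem).Finite := by
  constructor
  · intro hlf S M
    refine (hlf _ (wtaWeights_finite M)).subset ?_
    rintro b ⟨t, rfl⟩
    exact initSem_mem_closure M t
  · intro hfin A hA
    refine (hfin _ (constructM hA.toFinset)).subset ?_
    intro b hb
    have hb' : SBClosure (↑hA.toFinset : Set B) b := by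
      rwa [Set.Finite.coe_toFinset]
    obtain ⟨t, ht⟩ := h_true_surj hA.toFinset b hb'
    exact ⟨t, by rw [initSem_eq_h_true, ht]⟩
end

section
/- Let B be a strong bimonoid. Then the following two statements are equivalent: (A) B is bi-locally finite; (B) for each ranked alphabet Σ and for each (Σ,B)-weighted tree automaton 𝒜, the set im(⟦𝒜⟧_run) is finite. -/
variable {S : RankedAlphabet} {B : Type} [StrongBimonoid B]

/-- The positions of a tree (as lists of natural numbers). -/
def RTree.pos : RTree S → Finset (List ℕ)
  | .node _ ts =>
      insert [] (Finset.univ.biUnion fun i => ((ts i).pos).image (fun w => (i : ℕ) :: w))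

/-- The weight of a run `ρ` (given as a total map on positions) on a tree:
`wt(σ(t_1,…,t_k),ρ) = (⊗_i wt(t_i,ρ_i)) ⊗ δ_k(ρ(1)⋯ρ(k),σ,ρ(ε))`. -/
def WTA.wt (M : WTA S B) : RTree S → (List ℕ → M.Q) → B
  | .node σ ts => fun ρ =>
      (((List.finRange (S.rk σ)).map
          (fun i => M.wt (ts i) (fun w => ρ ((i : ℕ) :: w)))).prod)
        * M.δ σ (fun i => ρ [(i : ℕ)]) (ρ [])

/-- Extend a run, defined on the positions of `t`, to a total map on `List ℕ`. -/
noncomputable def WTA.extend (M : WTA S B) (t : RTree S) (ρ : ↑(t.pos) → M.Q) :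
    List ℕ → M.Q :=
  fun w => if h : w ∈ t.pos then ρ ⟨w, h⟩ else Classical.choice M.nonemptyQ

/-- The run semantics `⟦𝒜⟧_run(t) = ⊕_{ρ run of 𝒜 on t} wt(t,ρ) ⊗ F_{ρ(ε)}`. -/
noncomputable def WTA.runSem (M : WTA S B) (t : RTree S) : B :=
  ∑ ρ : (↑(t.pos) → M.Q), M.wt t (M.extend t ρ) * M.F (M.extend t ρ [])


/-! ### Auxiliary material -/

section Aux

lemma RTree.root_mem_pos (t : RTree S) : ([] : List ℕ) ∈ t.pos := by
  cases t with | node σ ts => simp [RTree.pos]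

lemma WTA.extend_nil (M : WTA S B) (t : RTree S) (ρ : ↑(t.pos) → M.Q) :
    M.extend t ρ [] = ρ ⟨[], t.root_mem_pos⟩ := by
  simp [WTA.extend, t.root_mem_pos]

lemma sum_apply_fun {α β M : Type*} [Fintype α] [DecidableEq α] [Fintype β]
    [AddCommMonoid M] (a0 : α) (g : β → M) :
    ∑ f : α → β, g (f a0) = Fintype.card ({x : α // x ≠ a0} → β) • ∑ y : β, g y := by
  rw [← Equiv.sum_comp (Equiv.funSplitAt a0 β).symm (fun f => g (f a0))]
  have key : ∀ p : β × ({x : α // x ≠ a0} → β), ((Equiv.funSplitAt a0 β).symm p) a0 = p.1 := by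
    intro p
    simp [Equiv.funSplitAt, Equiv.piSplitAt]
  simp only [key]
  rw [Fintype.sum_prod_type_right]
  simp [Finset.sum_const, Finset.card_univ, ← Finset.smul_sum]


lemma smul_range_finite_of_eq {b : B} {j k : ℕ} (hjk : j < k) (h : j • b = k • b) :
    (Set.range fun n : ℕ => n • b).Finite := by
  have key : ∀ n : ℕ, ∃ m : ℕ, m < k ∧ m • b = n • b := by
    intro n
    induction n using Nat.strong_induction_on with
    | _ n ih =>
      by_cases hn : n < k
      · exact ⟨n, hn, rfl⟩
      · push_neg at hn
        have hd : n - (k - j) < n := by omega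
        obtain ⟨m, hm, he⟩ := ih _ hd
        have hstep : (n - (k - j)) • b = n • b := by
          have h2 : n - (k - j) = (n - k) + j := by omega
          have h1 : n = (n - k) + k := by omega
          rw [h2, add_nsmul, h, ← add_nsmul, ← h1]
        exact ⟨m, hm, he.trans hstep⟩
  have hsub : (Set.range fun n : ℕ => n • b) ⊆ (fun m : ℕ => m • b) '' {m | m < k} := by
    rintro x ⟨n, rfl⟩
    obtain ⟨m, hm, he⟩ := key n
    exact ⟨m, hm, he⟩
  exact ((Set.finite_lt_nat k).image _).subset hsub

/-- The ranked alphabet with one nullary symbol `false` and one unary symbol `true`. -/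
def boolAlph : RankedAlphabet where
  symb := Bool
  fintype_symb := inferInstance
  nonempty_symb := inferInstance
  rk := fun s => cond s 1 0
  exists_nullary := ⟨false, rfl⟩

/-- The chain tree `true^n(false)`. -/
def chainTree : ℕ → RTree boolAlph
  | 0 => .node false (fun i => i.elim0)
  | n + 1 => .node true (fun _ => chainTree n)

lemma chainTree_pos_card (n : ℕ) : (chainTree n).pos.card = n + 1 := by
  induction n with
  | zero =>
    show (insert ([] : List ℕ) ((Finset.univ : Finset (Fin 0)).biUnion
      (fun i => ((fun j : Fin 0 => j.elim0 (α := RTree boolAlph)) i).pos.image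
        (fun w => (i : ℕ) :: w)))).card = 1
    simp
  | succ n ih =>
    show (insert ([] : List ℕ) ((Finset.univ : Finset (Fin 1)).biUnion
      (fun i => ((chainTree n).pos.image (fun w => (i : ℕ) :: w))))).card = n + 2
    rw [show (Finset.univ : Finset (Fin 1)) = {0} by decide, Finset.singleton_biUnion]
    rw [Finset.card_insert_of_notMem (by simp), Finset.card_image_of_injective _
      (fun a b hab => by simpa using hab), ih]

/-- The wta (over `boolAlph`) all of whose transition weights are `1`, with final
weights `F(true) = b` and `F(false) = 0`. -/
def addWTA (B : Type) [StrongBimonoid B] (b : B) : WTA boolAlph B where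
  Q := Bool
  fintypeQ := inferInstance
  nonemptyQ := inferInstance
  δ := fun _ _ _ => 1
  F := fun q => cond q b 0

lemma addWTA_wt (b : B) (t : RTree boolAlph) (ρ : List ℕ → Bool) :
    (addWTA B b).wt t ρ = 1 := by
  induction t generalizing ρ with
  | node σ ts ih =>
    show (((List.finRange (boolAlph.rk σ)).map _).prod) * (1 : B) = 1
    rw [mul_one]
    apply List.prod_eq_one
    intro x hx
    rw [List.mem_map] at hx
    obtain ⟨i, -, rfl⟩ := hx
    exact ih i _

lemma addWTA_runSem (b : B) (n : ℕ) :
    (addWTA B b).runSem (chainTree n) = (2 ^ n) • b := by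
  classical
  set t := chainTree n with ht
  set r : ↑(t.pos) := (⟨[], t.root_mem_pos⟩ : ↑(t.pos)) with hr
  have hq : Fintype.card ((addWTA B b).Q) = 2 := by
    have e : ((addWTA B b).Q) ≃ Bool := Equiv.refl _
    rw [Fintype.card_congr e, Fintype.card_bool]
  have hcard : Fintype.card ({x : ↑(t.pos) // x ≠ r} → (addWTA B b).Q) = 2 ^ n := by
    rw [Fintype.card_fun, hq]
    congr 1
    have h1 : Fintype.card {x : ↑(t.pos) // x = r} = 1 := Fintype.card_subtype_eq _
    have h2 := Fintype.card_subtype_compl (fun x : ↑(t.pos) => x = r)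
    rw [h1, Fintype.card_coe] at h2
    have hc : t.pos.card = n + 1 := chainTree_pos_card n
    have h3 : Fintype.card {x : ↑(t.pos) // x ≠ r}
        = Fintype.card {x : ↑(t.pos) // ¬ x = r} :=
      Fintype.card_congr (Equiv.subtypeEquivRight (fun _ => Iff.rfl))
    omega
  have hwt : ∀ ρ : ↑(t.pos) → (addWTA B b).Q,
      (addWTA B b).wt t ((addWTA B b).extend t ρ)
          * (addWTA B b).F ((addWTA B b).extend t ρ []) = (addWTA B b).F (ρ r) := by
    intro ρ
    refine (congrArg (· * _) (addWTA_wt b t _)).trans ?_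
    rw [one_mul, WTA.extend_nil]
  unfold WTA.runSem
  rw [Finset.sum_congr rfl (fun ρ _ => hwt ρ)]
  rw [sum_apply_fun r (addWTA B b).F, hcard]
  have hFsum : ∑ y : (addWTA B b).Q, (addWTA B b).F y = b := by
    show ∑ y : Bool, (fun q => cond q b 0) y = b
    rw [Fintype.sum_bool]
    show b + 0 = b
    rw [add_zero]
  rw [hFsum]

lemma nsmul_range_finite
    (h : ∀ (S : RankedAlphabet) (M : WTA S B), (Set.range M.runSem).Finite) (b : B) :
    (Set.range fun n : ℕ => n • b).Finite := by
  have hfin := h boolAlph (addWTA B b)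
  have h2 : (Set.range fun n : ℕ => (2 ^ n) • b).Finite := by
    apply hfin.subset
    rintro x ⟨n, rfl⟩
    exact ⟨chainTree n, addWTA_runSem b n⟩
  have hni : ¬ Function.Injective (fun n : ℕ => (2 ^ n) • b) := by
    intro hinj
    exact Set.infinite_range_of_injective hinj h2
  rw [Function.not_injective_iff] at hni
  obtain ⟨j, k, hjk, hne⟩ := hni
  rcases Nat.lt_or_ge j k with hlt | hge
  · exact smul_range_finite_of_eq (Nat.pow_lt_pow_right one_lt_two hlt) hjk
  · have hlt : k < j := lt_of_le_of_ne hge (Ne.symm hne)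
    exact smul_range_finite_of_eq (Nat.pow_lt_pow_right one_lt_two hlt) hjk.symm

/-- The ranked alphabet with a nullary symbol `none` and unary symbols `some x`. -/
def optAlph (X : Type) [Fintype X] : RankedAlphabet where
  symb := Option X
  fintype_symb := inferInstance
  nonempty_symb := ⟨none⟩
  rk := fun s => s.elim 0 (fun _ => 1)
  exists_nullary := ⟨none, rfl⟩

/-- The single-state wta over `optAlph X` with weights `v x` on the unary symbols. -/
def mulWTA (B : Type) [StrongBimonoid B] (X : Type) [Fintype X] (v : X → B) :
    WTA (optAlph X) B where
  Q := Unit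
  fintypeQ := inferInstance
  nonemptyQ := ⟨()⟩
  δ := fun s _ _ => s.elim 1 v
  F := fun _ => 1

/-- The chain tree spelled by a list of unary symbols. -/
def mulChain {X : Type} [Fintype X] : List X → RTree (optAlph X)
  | [] => .node none (fun i => i.elim0)
  | x :: l => .node (some x) (fun _ => mulChain l)

lemma mulChain_wt {X : Type} [Fintype X] (v : X → B) (l : List X) (ρ : List ℕ → Unit) :
    (mulWTA B X v).wt (mulChain l) ρ = (l.map v).reverse.prod := by
  induction l generalizing ρ with
  | nil =>
    show (((List.finRange 0).map _).prod) * (1 : B) = _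
    simp
    rfl
  | cons x l ih =>
    show (((List.finRange 1).map _).prod) * v x = _
    rw [show List.finRange 1 = [0] from rfl]
    simp only [List.map_cons, List.map_nil, List.prod_cons, List.prod_nil, mul_one]
    show (mulWTA B X v).wt (mulChain l) (fun w => ρ (((0 : Fin 1) : ℕ) :: w)) * 1 * v x = _
    rw [mul_one, ih]
    simp [List.prod_append]

lemma mulWTA_runSem {X : Type} [Fintype X] (v : X → B) (l : List X) :
    (mulWTA B X v).runSem (mulChain l) = (l.map v).reverse.prod := by
  haveI : Unique ((mulWTA B X v).Q) := show Unique Unit from inferInstance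
  unfold WTA.runSem
  rw [Fintype.sum_unique]
  refine (congrArg (· * _) (mulChain_wt v l _)).trans ?_
  show _ * (1 : B) = _
  rw [mul_one]

end Aux

/-- `B` is bi-locally finite iff for every ranked alphabet `Σ` and every wta `𝒜` over
`Σ` and `B`, the image of the run semantics of `𝒜` is finite. -/
theorem statement8 (B : Type) [StrongBimonoid B] :
    BiLocallyFinite B ↔
      ∀ (S : RankedAlphabet) (M : WTA S B), (Set.range M.runSem).Finite := by
  constructor
  · -- forward direction
    rintro ⟨hAdd, hMul⟩ S M
    set D : Set B := Set.range
        (fun x : Σ σ : S.symb, (Fin (S.rk σ) → M.Q) × M.Q => M.δ x.1 x.2.1 x.2.2)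
      ∪ Set.range M.F with hD
    have hDfin : D.Finite := (Set.finite_range _).union (Set.finite_range _)
    have hwt : ∀ (t : RTree S) (ρ : List ℕ → M.Q), M.wt t ρ ∈ Submonoid.closure D := by
      intro t
      induction t with
      | node σ ts ih =>
        intro ρ
        show (((List.finRange (S.rk σ)).map
            (fun i => M.wt (ts i) (fun w => ρ ((i : ℕ) :: w)))).prod)
          * M.δ σ (fun i => ρ [(i : ℕ)]) (ρ []) ∈ _
        refine mul_mem (Submonoid.list_prod_mem _ ?_)
          (Submonoid.subset_closure (Or.inl ⟨⟨σ, fun i => ρ [(i : ℕ)], ρ []⟩, rfl⟩))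
        intro x hx
        rw [List.mem_map] at hx
        obtain ⟨i, -, rfl⟩ := hx
        exact ih i _
    have hP : ((Submonoid.closure D : Submonoid B) : Set B).Finite := hMul D hDfin
    have hC := hAdd _ hP
    apply hC.subset
    rintro x ⟨t, rfl⟩
    rw [SetLike.mem_coe]
    exact AddSubmonoid.sum_mem _ (fun ρ _ => AddSubmonoid.subset_closure
      (mul_mem (hwt t _) (Submonoid.subset_closure (Or.inr ⟨_, rfl⟩))))
  · -- backward direction
    intro h
    constructor
    · -- additively locally finite
      intro A hA
      classical
      haveI := hA.fintype
      set Sf : ↥A → Set B := fun a => ((AddSubmonoid.closure {(a : B)} : AddSubmonoid B) : Set B)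
        with hSf
      have hSfin : ∀ a : ↥A, (Sf a).Finite := by
        intro a
        apply (nsmul_range_finite h (a : B)).subset
        intro x hx
        rw [hSf] at hx
        simp only [SetLike.mem_coe, AddSubmonoid.mem_closure_singleton] at hx
        obtain ⟨n, hn⟩ := hx
        exact ⟨n, hn⟩
      have hT : ((fun g : ↥A → B => ∑ a, g a) '' (Set.univ.pi fun a => Sf a)).Finite :=
        (Set.Finite.pi (fun a => hSfin a)).image _
      apply hT.subset
      intro b hb
      rw [SetLike.mem_coe] at hb
      induction hb using AddSubmonoid.closure_induction with
      | mem x hx =>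
        refine ⟨fun a' => if a' = ⟨x, hx⟩ then x else 0, ?_, ?_⟩
        · intro a _
          show (if a = (⟨x, hx⟩ : ↥A) then x else 0) ∈ Sf a
          by_cases hcase : a = ⟨x, hx⟩
          · rw [if_pos hcase, hcase]
            exact SetLike.mem_coe.mpr (AddSubmonoid.subset_closure rfl)
          · rw [if_neg hcase]
            exact SetLike.mem_coe.mpr (zero_mem _)
        · show ∑ a : ↥A, (if a = (⟨x, hx⟩ : ↥A) then x else 0) = x
          simp
      | zero =>
        refine ⟨fun _ => 0, fun a _ => SetLike.mem_coe.mpr (zero_mem _), ?_⟩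
        show ∑ _a : ↥A, (0 : B) = 0
        exact Finset.sum_const_zero
      | add x y hx hy ihx ihy =>
        obtain ⟨g1, hg1, e1⟩ := ihx
        obtain ⟨g2, hg2, e2⟩ := ihy
        have e1' : ∑ a, g1 a = x := e1
        have e2' : ∑ a, g2 a = y := e2
        refine ⟨g1 + g2, ?_, ?_⟩
        · intro a ha
          show g1 a + g2 a ∈ Sf a
          exact SetLike.mem_coe.mpr
            (add_mem (SetLike.mem_coe.mp (hg1 a ha)) (SetLike.mem_coe.mp (hg2 a ha)))
        · show ∑ a, (g1 a + g2 a) = x + y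
          rw [Finset.sum_add_distrib, e1', e2']
    · -- multiplicatively locally finite
      intro A hA
      classical
      haveI := hA.fintype
      apply (h (optAlph ↥A) (mulWTA B ↥A (fun a => (a : B)))).subset
      intro b hb
      rw [SetLike.mem_coe] at hb
      obtain ⟨l, hl, rfl⟩ := Submonoid.exists_list_of_mem_closure hb
      refine ⟨mulChain ((l.pmap (fun x hx => (⟨x, hx⟩ : ↥A)) hl).reverse), ?_⟩
      rw [mulWTA_runSem]
      simp [List.map_reverse, List.map_pmap]
end

section
/- Let B be a weakly locally finite strong bimonoid. Then for each monadic ranked alphabet Σ and for each (Σ,B)-weighted tree automaton 𝒜, the set im(⟦𝒜⟧_init) is finite. -/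
variable {S : RankedAlphabet} {B : Type} [StrongBimonoid B]

lemma wc_sum {B : Type} [StrongBimonoid B] {A : Set B} {ι : Type*} (s : Finset ι)
    (f : ι → B) (hf : ∀ i ∈ s, WeakClosure A (f i)) : WeakClosure A (∑ i ∈ s, f i) :=
  Finset.sum_induction f (WeakClosure A) (fun _ _ => WeakClosure.add) WeakClosure.zero hf

lemma wc_prod {B : Type} [StrongBimonoid B] {A : Set B} (h1 : (1 : B) ∈ A) :
    ∀ (k : ℕ), k ≤ 1 → ∀ (g : Fin k → B), (∀ i, WeakClosure A (g i)) →
      WeakClosure A ((List.finRange k).map g).prod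
  | 0, _, g, _ => by simpa using WeakClosure.one
  | 1, _, g, hg => by
      have : (List.finRange 1).map g = [g 0] := by
        simp [List.finRange_succ]
      rw [this, List.prod_cons, List.prod_nil]
      exact WeakClosure.mulr (hg 0) h1
  | (k+2), hk, _, _ => by omega

/-- If `B` is weakly locally finite, then for each monadic ranked alphabet `Σ` and
each wta `𝒜` over `Σ` and `B`, the image of the initial algebra semantics is finite. -/
theorem statement9 (B : Type) [StrongBimonoid B] (h : WeaklyLocallyFinite B) :
    ∀ S : RankedAlphabet, (∀ σ, S.rk σ ≤ 1) →
      ∀ M : WTA S B, (Set.range M.initSem).Finite := by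
  intro S hmon M
  set A : Set B := ({1} ∪ Set.range M.F) ∪
      ⋃ σ, Set.range (fun p : (Fin (S.rk σ) → M.Q) × M.Q => M.δ σ p.1 p.2) with hA
  have hAfin : A.Finite := by
    refine (((Set.finite_singleton 1).union (Set.finite_range _)).union
      (Set.finite_iUnion fun σ => Set.finite_range _))
  have h1A : (1 : B) ∈ A := Or.inl (Or.inl rfl)
  have hFA : ∀ q, M.F q ∈ A := fun q => Or.inl (Or.inr ⟨q, rfl⟩)
  have hδA : ∀ σ qs q, M.δ σ qs q ∈ A := fun σ qs q =>
    Or.inr (Set.mem_iUnion.mpr ⟨σ, ⟨(qs, q), rfl⟩⟩)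
  have key : ∀ t q, WeakClosure A (M.h t q) := by
    intro t
    induction t with
    | node σ ts ih =>
      intro q
      show WeakClosure A (∑ qs : Fin (S.rk σ) → M.Q,
        (((List.finRange (S.rk σ)).map (fun i => M.h (ts i) (qs i))).prod) * M.δ σ qs q)
      refine wc_sum _ _ fun qs _ => WeakClosure.mulr ?_ (hδA σ qs q)
      exact wc_prod h1A _ (hmon σ) _ (fun i => ih i (qs i))
  refine ((h A hAfin).subset ?_)
  rintro _ ⟨t, rfl⟩
  exact wc_sum _ _ fun q _ => WeakClosure.mulr (key t q) (hFA q)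
end

section
/- Let B be a right-distributive strong bimonoid. Then B is bi-locally finite if and only if B is weakly locally finite. -/
/-- For a right-distributive strong bimonoid, bi-local finiteness and weak local
finiteness coincide. -/
theorem statement12 (B : Type*) [StrongBimonoid B] (hrd : SBRightDistributive B) :
    BiLocallyFinite B ↔ WeaklyLocallyFinite B := by
  constructor
  · rintro ⟨hadd, hmul⟩ A hA
    have hM : ((Submonoid.closure A : Submonoid B) : Set B).Finite := hmul A hA
    have hfin : ((AddSubmonoid.closure ((Submonoid.closure A : Submonoid B) : Set B)
        : AddSubmonoid B) : Set B).Finite := hadd _ hM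
    refine hfin.subset ?_
    intro b hb
    induction hb with
    | base ha => exact AddSubmonoid.subset_closure (Submonoid.subset_closure ha)
    | zero => exact zero_mem _
    | one => exact AddSubmonoid.subset_closure (one_mem _)
    | add _ _ ih1 ih2 => exact add_mem ih1 ih2
    | mulr _ ha ih =>
        rename_i b a _
        refine AddSubmonoid.closure_induction
          (fun m hm => AddSubmonoid.subset_closure
            (mul_mem hm (Submonoid.subset_closure ha))) ?_ ?_ ih
        · simpa using AddSubmonoid.zero_mem _
        · intro x y _ _ hx hy
          rw [hrd]
          exact add_mem hx hy
  · intro h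
    constructor
    · intro A hA
      refine (h A hA).subset ?_
      intro b hb
      induction hb using AddSubmonoid.closure_induction with
      | mem a ha => exact WeakClosure.base ha
      | zero => exact WeakClosure.zero
      | add _ _ _ _ h1 h2 => exact WeakClosure.add h1 h2
    · intro A hA
      refine (h A hA).subset ?_
      intro b hb
      have key : ∀ c : B, WeakClosure A c → WeakClosure A (c * b) := by
        induction hb using Submonoid.closure_induction with
        | mem a ha => exact fun c hc => WeakClosure.mulr hc ha
        | one => intro c hc; simpa using hc
        | mul x y _ _ hx hy =>
            intro c hc
            rw [← mul_assoc]
            exact hy _ (hx _ hc)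
      simpa using key 1 WeakClosure.one
end

section
/- Let B be an almost idempotent strong bimonoid. Then B is additively locally finite; indeed, for each finite subset A⊆B, the submonoid of (B,⊕,0) generated by A consists of all finite sums of elements from A in which each summand occurs at most twice, and hence is finite. -/
section Aux
variable {B : Type*} [StrongBimonoid B]

lemma smul_ge_two (h : AlmostIdempotent B) (b : B) : ∀ n, 2 ≤ n → n • b = 2 • b := by
  intro n hn
  induction n with
  | zero => omega
  | succ m ih =>
    rcases Nat.lt_or_ge m 2 with hm | hm
    · interval_cases m
      · omega
      · rfl
    · rw [succ_nsmul, ih hm, two_nsmul]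
      exact h b

lemma min_smul (h : AlmostIdempotent B) (b : B) (n : ℕ) : (min n 2) • b = n • b := by
  rcases le_or_gt n 2 with hn | hn
  · rw [min_eq_left hn]
  · rw [min_eq_right hn.le, smul_ge_two h b n hn.le]

lemma statement13_key (h : AlmostIdempotent B) (A : Set B) (hA : A.Finite) :
    ((AddSubmonoid.closure A : Set B) =
      {b : B | ∃ f : B →₀ ℕ, ↑f.support ⊆ A ∧ (∀ x, f x ≤ 2) ∧
        b = f.sum fun x n => n • x}) ∧
    (AddSubmonoid.closure A : Set B).Finite := by
  classical
  have heq : (AddSubmonoid.closure A : Set B) =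
      {b : B | ∃ f : B →₀ ℕ, ↑f.support ⊆ A ∧ (∀ x, f x ≤ 2) ∧
        b = f.sum fun x n => n • x} := by
    ext b
    constructor
    · intro hb
      induction hb using AddSubmonoid.closure_induction with
      | mem a ha =>
        refine ⟨Finsupp.single a 1, ?_, ?_, ?_⟩
        · intro x hx
          rw [Finsupp.support_single_ne_zero _ one_ne_zero] at hx
          simp only [Finset.coe_singleton, Set.mem_singleton_iff] at hx
          subst hx; exact ha
        · intro x
          rcases eq_or_ne x a with rfl | hxa
          · simp
          · simp [Finsupp.single_apply, hxa, Ne.symm hxa]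
        · rw [Finsupp.sum_single_index (by simp), one_smul]
      | zero =>
        exact ⟨0, by simp, by simp, by simp⟩
      | add x y hx hy ihx ihy =>
        obtain ⟨f, hf1, hf2, rfl⟩ := ihx
        obtain ⟨g, hg1, hg2, rfl⟩ := ihy
        refine ⟨Finsupp.mapRange (fun n => min n 2) (by simp) (f + g), ?_, ?_, ?_⟩
        · intro x hx
          simp only [Finset.mem_coe, Finsupp.mem_support_iff, Finsupp.mapRange_apply,
            Finsupp.add_apply] at hx
          have hne : f x + g x ≠ 0 := by intro h0; simp [h0] at hx
          by_cases hfx : f x = 0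
          · exact hg1 (Finsupp.mem_support_iff.mpr (by omega))
          · exact hf1 (Finsupp.mem_support_iff.mpr hfx)
        · intro x; simp [Finsupp.mapRange_apply]
        · rw [Finsupp.sum_mapRange_index (by simp)]
          have : ((f + g).sum fun x n => (min n 2) • x) = (f + g).sum fun x n => n • x :=
            Finsupp.sum_congr fun x _ => min_smul h x _
          rw [this, Finsupp.sum_add_index' (fun x => zero_smul ℕ x)
            (fun x n m => add_nsmul x n m)]
    · rintro ⟨f, hf1, hf2, rfl⟩
      refine AddSubmonoid.sum_mem _ fun x hx => ?_
      exact AddSubmonoid.nsmul_mem _ (AddSubmonoid.subset_closure (hf1 hx)) _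
  refine ⟨heq, ?_⟩
  rw [heq]
  set g : B →₀ ℕ := Finsupp.indicator hA.toFinset (fun _ _ => 2) with hg
  have hsub : {b : B | ∃ f : B →₀ ℕ, ↑f.support ⊆ A ∧ (∀ x, f x ≤ 2) ∧
      b = f.sum fun x n => n • x} ⊆
      (fun f : B →₀ ℕ => f.sum fun x n => n • x) '' (Set.Iic g) := by
    rintro b ⟨f, hf1, hf2, rfl⟩
    refine ⟨f, ?_, rfl⟩
    intro x
    by_cases hx : x ∈ A
    · have : g x = 2 := by
        rw [hg, Finsupp.indicator_apply]
        simp [hA.mem_toFinset.mpr hx]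
      rw [this]; exact hf2 x
    · have : f x = 0 := by
        by_contra h0
        exact hx (hf1 (Finsupp.mem_support_iff.mpr h0))
      simp [this]
  exact ((Set.finite_Iic g).image _).subset hsub

end Aux

/-- An almost idempotent strong bimonoid is additively locally finite: for each finite
`A ⊆ B`, the additive submonoid generated by `A` consists of all finite sums of elements
of `A` in which each summand occurs at most twice, and hence is finite. -/
theorem statement13 (B : Type*) [StrongBimonoid B] (h : AlmostIdempotent B) :
    AddLocallyFinite B ∧
    ∀ A : Set B, A.Finite →
      ((AddSubmonoid.closure A : Set B) =
        {b : B | ∃ f : B →₀ ℕ, ↑f.support ⊆ A ∧ (∀ x, f x ≤ 2) ∧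
          b = f.sum fun x n => n • x}) ∧
      (AddSubmonoid.closure A : Set B).Finite :=
  ⟨fun A hA => (statement13_key h A hA).2, fun A hA => statement13_key h A hA⟩
end

section
/- Let X be a nonempty set and let p,q,r∈S(X)∖{0_S,1_S}. Then: (a) p×_S(q×_S r) is large; (b) if p is large, then p+_S q, p×_S q, and q×_S p are also large. -/
/-- Terms over the ranked alphabet `Σ = {+⁽²⁾, ×⁽²⁾, 0⁽⁰⁾, 1⁽⁰⁾}` and the set `X`. -/
inductive STerm (X : Type) : Type
  | zero : STerm X
  | one : STerm X
  | var (x : X) : STerm X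
  | add (s t : STerm X) : STerm X
  | mul (s t : STerm X) : STerm X

namespace STerm

/-- `t.ok` holds iff `t` contains no occurrence of `0`, no subterm `1 × t'` and no
subterm `t' × 1`. -/
def ok {X : Type} : STerm X → Prop
  | zero => False
  | one => True
  | var _ => True
  | add s t => ok s ∧ ok t
  | mul s t => ok s ∧ ok t ∧ s ≠ one ∧ t ≠ one

/-- A term is simple if it is `0`, or it is different from `0` and contains no `0`,
no subterm of the form `1 × t'` and no subterm of the form `t' × 1`. -/
def Simple {X : Type} (t : STerm X) : Prop := t = zero ∨ ok t

end STerm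

/-- The set `ST_Σ(X)` of simple terms. -/
def SimpleT (X : Type) : Type := {t : STerm X // t.Simple}

open Classical in
/-- The addition `+_ST` on simple terms: `t + 0 = 0 + t = t` and `s + t = add s t` otherwise. -/
noncomputable def stAdd {X : Type} (s t : SimpleT X) : SimpleT X :=
  if hs : s.1 = STerm.zero then t
  else if ht : t.1 = STerm.zero then s
  else ⟨STerm.add s.1 t.1, Or.inr ⟨s.2.resolve_left hs, t.2.resolve_left ht⟩⟩

open Classical in
/-- The multiplication `×_ST` on simple terms: `t × 0 = 0 × t = 0`, `t × 1 = 1 × t = t`,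
and `s × t = mul s t` otherwise. -/
noncomputable def stMul {X : Type} (s t : SimpleT X) : SimpleT X :=
  if h0 : s.1 = STerm.zero ∨ t.1 = STerm.zero then ⟨STerm.zero, Or.inl rfl⟩
  else if hs : s.1 = STerm.one then t
  else if ht : t.1 = STerm.one then s
  else ⟨STerm.mul s.1 t.1,
    Or.inr ⟨s.2.resolve_left (fun h => h0 (Or.inl h)),
      t.2.resolve_left (fun h => h0 (Or.inr h)), hs, ht⟩⟩

/-- The simple term `0`. -/
def stZero {X : Type} : SimpleT X := ⟨STerm.zero, Or.inl rfl⟩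

/-- The simple term `1`. -/
def stOne {X : Type} : SimpleT X := ⟨STerm.one, Or.inr trivial⟩

/-- The congruence `≈_E` on `ST_Σ(X)` induced by the identities
`e₁ : z₁+(z₂+z₃) = (z₁+z₂)+z₃`, `e₂ : z₁+z₂ = z₂+z₁`, `e₃ : z₁×(z₂×z₃) = (z₁×z₂)×z₃`,
`e₄ : z₁+z₁ = z₁+(z₁+z₁)`, `e₅ : (z₁+z₂)×z₃ = (z₁×z₃)+(z₂×z₃)`:
the smallest congruence containing all instances of these identities. -/
inductive eqE {X : Type} : SimpleT X → SimpleT X → Prop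
  | addAssoc (a b c : SimpleT X) : eqE (stAdd a (stAdd b c)) (stAdd (stAdd a b) c)
  | addComm (a b : SimpleT X) : eqE (stAdd a b) (stAdd b a)
  | mulAssoc (a b c : SimpleT X) : eqE (stMul a (stMul b c)) (stMul (stMul a b) c)
  | almostIdem (a : SimpleT X) : eqE (stAdd a a) (stAdd a (stAdd a a))
  | rightDistrib (a b c : SimpleT X) :
      eqE (stMul (stAdd a b) c) (stAdd (stMul a c) (stMul b c))
  | refl (a : SimpleT X) : eqE a a
  | symm {a b : SimpleT X} : eqE a b → eqE b a
  | trans {a b c : SimpleT X} : eqE a b → eqE b c → eqE a c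
  | addCongr {a b c d : SimpleT X} : eqE a b → eqE c d → eqE (stAdd a c) (stAdd b d)
  | mulCongr {a b c d : SimpleT X} : eqE a b → eqE c d → eqE (stMul a c) (stMul b d)

instance stSetoid (X : Type) : Setoid (SimpleT X) :=
  ⟨eqE, ⟨eqE.refl, eqE.symm, eqE.trans⟩⟩

/-- The quotient algebra `S(X) = ST_Σ(X)/≈_E`. -/
def SX (X : Type) : Type := Quotient (stSetoid X)

/-- The addition `+_S` of `S(X)`. -/
noncomputable def sAdd {X : Type} : SX X → SX X → SX X :=
  Quotient.map₂ stAdd fun _ _ h1 _ _ h2 => eqE.addCongr h1 h2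

/-- The multiplication `×_S` of `S(X)`. -/
noncomputable def sMul {X : Type} : SX X → SX X → SX X :=
  Quotient.map₂ stMul fun _ _ h1 _ _ h2 => eqE.mulCongr h1 h2

/-- The element `0_S` of `S(X)`. -/
def sZero (X : Type) : SX X := ⟦stZero⟧

/-- The element `1_S` of `S(X)`. -/
def sOne (X : Type) : SX X := ⟦stOne⟧

namespace STerm

/-- Whether a term is of the form `t₁ × t₂`. -/
def isMul {X : Type} : STerm X → Prop
  | mul _ _ => True
  | _ => False

/-- Whether a term has a subterm of the form `t₁×(t₂×t₃)` or `(t₁×t₂)×t₃`. -/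
def nested {X : Type} : STerm X → Prop
  | add s t => nested s ∨ nested t
  | mul s t => isMul s ∨ isMul t ∨ nested s ∨ nested t
  | _ => False

end STerm

/-- An element `p ∈ S(X) ∖ {0_S, 1_S}` is large if `p = [s]_E` for some simple term `s`
having a subterm of the form `t₁×(t₂×t₃)` or `(t₁×t₂)×t₃`. -/
def Large {X : Type} (p : SX X) : Prop :=
  p ≠ sZero X ∧ p ≠ sOne X ∧ ∃ s : SimpleT X, p = ⟦s⟧ ∧ s.1.nested

/-- The relation `∼la`: `q ∼la r` iff `q = r` or both `q` and `r` are large. -/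
def simLa {X : Type} (q r : SX X) : Prop := q = r ∨ (Large q ∧ Large r)

section Aux
variable {X : Type}

lemma not_both (x : SimpleT X) : ¬(x.1 = STerm.zero ∧ x.1 = STerm.one) := by
  rintro ⟨h1, h2⟩; exact nomatch (h1.symm.trans h2)

lemma stAdd_zero_iff (a b : SimpleT X) :
    (stAdd a b).1 = STerm.zero ↔ a.1 = STerm.zero ∧ b.1 = STerm.zero := by
  unfold stAdd; split_ifs <;> simp_all

lemma stAdd_one_iff (a b : SimpleT X) :
    (stAdd a b).1 = STerm.one ↔ (a.1 = STerm.zero ∧ b.1 = STerm.one) ∨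
      (a.1 = STerm.one ∧ b.1 = STerm.zero) := by
  unfold stAdd; split_ifs <;> simp_all

lemma stMul_zero_iff (a b : SimpleT X) :
    (stMul a b).1 = STerm.zero ↔ a.1 = STerm.zero ∨ b.1 = STerm.zero := by
  have ha := not_both a; have hb := not_both b
  by_cases h0 : a.1 = STerm.zero ∨ b.1 = STerm.zero
  · have e : stMul a b = stZero := by unfold stMul; exact dif_pos h0
    rw [e]; show STerm.zero = _ ↔ _; tauto
  by_cases hs : a.1 = STerm.one
  · have e : stMul a b = b := by unfold stMul; exact (dif_neg h0).trans (dif_pos hs)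
    rw [e]; tauto
  by_cases ht : b.1 = STerm.one
  · have e : stMul a b = a := by
      unfold stMul; exact (dif_neg h0).trans ((dif_neg hs).trans (dif_pos ht))
    rw [e]; tauto
  have e : (stMul a b).1 = STerm.mul a.1 b.1 := by
    unfold stMul; split_ifs <;> simp_all
  rw [e]; simp only [reduceCtorEq, false_iff]; tauto

lemma stMul_one_iff (a b : SimpleT X) :
    (stMul a b).1 = STerm.one ↔ a.1 = STerm.one ∧ b.1 = STerm.one := by
  have ha := not_both a; have hb := not_both b
  by_cases h0 : a.1 = STerm.zero ∨ b.1 = STerm.zero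
  · have e : stMul a b = stZero := by unfold stMul; exact dif_pos h0
    rw [e]; show STerm.zero = _ ↔ _; tauto
  by_cases hs : a.1 = STerm.one
  · have e : stMul a b = b := by unfold stMul; exact (dif_neg h0).trans (dif_pos hs)
    rw [e]; tauto
  by_cases ht : b.1 = STerm.one
  · have e : stMul a b = a := by
      unfold stMul; exact (dif_neg h0).trans ((dif_neg hs).trans (dif_pos ht))
    rw [e]; tauto
  have e : (stMul a b).1 = STerm.mul a.1 b.1 := by
    unfold stMul; split_ifs <;> simp_all
  rw [e]; simp only [reduceCtorEq, false_iff]; tauto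

lemma stAdd_val (a b : SimpleT X) (ha : a.1 ≠ STerm.zero) (hb : b.1 ≠ STerm.zero) :
    (stAdd a b).1 = STerm.add a.1 b.1 := by
  unfold stAdd; split_ifs <;> simp_all

lemma stMul_val (a b : SimpleT X) (ha : a.1 ≠ STerm.zero) (hb : b.1 ≠ STerm.zero)
    (ha1 : a.1 ≠ STerm.one) (hb1 : b.1 ≠ STerm.one) :
    (stMul a b).1 = STerm.mul a.1 b.1 := by
  unfold stMul; split_ifs <;> simp_all

lemma eqE_inv {s t : SimpleT X} (h : eqE s t) :
    (s.1 = STerm.zero ↔ t.1 = STerm.zero) ∧ (s.1 = STerm.one ↔ t.1 = STerm.one) := by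
  induction h with
  | addAssoc a b c => simp only [stAdd_zero_iff, stAdd_one_iff]; tauto
  | addComm a b => simp only [stAdd_zero_iff, stAdd_one_iff]; tauto
  | mulAssoc a b c => simp only [stMul_zero_iff, stMul_one_iff]; tauto
  | almostIdem a => simp only [stAdd_zero_iff, stAdd_one_iff]; tauto
  | rightDistrib a b c =>
      have ha := not_both a; have hb := not_both b; have hc := not_both c
      simp only [stAdd_zero_iff, stAdd_one_iff, stMul_zero_iff, stMul_one_iff]; tauto
  | refl a => simp
  | symm _ ih => exact ⟨ih.1.symm, ih.2.symm⟩
  | trans _ _ ih1 ih2 => exact ⟨ih1.1.trans ih2.1, ih1.2.trans ih2.2⟩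
  | addCongr _ _ ih1 ih2 => simp only [stAdd_zero_iff, stAdd_one_iff]; tauto
  | mulCongr _ _ ih1 ih2 => simp only [stMul_zero_iff, stMul_one_iff]; tauto

lemma mk_eq_zero {a : SimpleT X} : (⟦a⟧ : SX X) = sZero X ↔ a.1 = STerm.zero := by
  constructor
  · intro h; exact (eqE_inv (Quotient.exact h)).1.mpr rfl
  · intro h; have : a = stZero := Subtype.ext h; rw [this]; rfl

lemma mk_eq_one {a : SimpleT X} : (⟦a⟧ : SX X) = sOne X ↔ a.1 = STerm.one := by
  constructor
  · intro h; exact (eqE_inv (Quotient.exact h)).2.mpr rfl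
  · intro h; have : a = stOne := Subtype.ext h; rw [this]; rfl

lemma nested_ne_zero {t : STerm X} (h : t.nested) : t ≠ STerm.zero := by
  rintro rfl; exact h

lemma nested_ne_one {t : STerm X} (h : t.nested) : t ≠ STerm.one := by
  rintro rfl; exact h

lemma sMul_mk (a b : SimpleT X) : sMul (⟦a⟧ : SX X) ⟦b⟧ = ⟦stMul a b⟧ := rfl
lemma sAdd_mk (a b : SimpleT X) : sAdd (⟦a⟧ : SX X) ⟦b⟧ = ⟦stAdd a b⟧ := rfl

end Aux

/-- Let `p, q, r ∈ S(X) ∖ {0_S, 1_S}`. Then (a) `p ×_S (q ×_S r)` is large, and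
(b) if `p` is large, then `p +_S q`, `p ×_S q` and `q ×_S p` are large. -/
theorem statement17 (X : Type) (hX : Nonempty X) (p q r : SX X)
    (hp : p ≠ sZero X ∧ p ≠ sOne X)
    (hq : q ≠ sZero X ∧ q ≠ sOne X)
    (hr : r ≠ sZero X ∧ r ≠ sOne X) :
    Large (sMul p (sMul q r)) ∧
    (Large p → Large (sAdd p q) ∧ Large (sMul p q) ∧ Large (sMul q p)) := by
  obtain ⟨a, rfl⟩ := Quotient.exists_rep p
  obtain ⟨b, rfl⟩ := Quotient.exists_rep q
  obtain ⟨c, rfl⟩ := Quotient.exists_rep r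
  have ha0 : a.1 ≠ STerm.zero := fun h => hp.1 (mk_eq_zero.mpr h)
  have ha1 : a.1 ≠ STerm.one := fun h => hp.2 (mk_eq_one.mpr h)
  have hb0 : b.1 ≠ STerm.zero := fun h => hq.1 (mk_eq_zero.mpr h)
  have hb1 : b.1 ≠ STerm.one := fun h => hq.2 (mk_eq_one.mpr h)
  have hc0 : c.1 ≠ STerm.zero := fun h => hr.1 (mk_eq_zero.mpr h)
  have hc1 : c.1 ≠ STerm.one := fun h => hr.2 (mk_eq_one.mpr h)
  constructor
  · -- part (a)
    have hbc : (stMul b c).1 = STerm.mul b.1 c.1 := stMul_val b c hb0 hc0 hb1 hc1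
    have hbc0 : (stMul b c).1 ≠ STerm.zero := by rw [hbc]; nofun
    have hbc1 : (stMul b c).1 ≠ STerm.one := by rw [hbc]; nofun
    have habc : (stMul a (stMul b c)).1 = STerm.mul a.1 (STerm.mul b.1 c.1) := by
      rw [stMul_val a _ ha0 hbc0 ha1 hbc1, hbc]
    rw [sMul_mk, sMul_mk]
    refine ⟨?_, ?_, stMul a (stMul b c), rfl, ?_⟩
    · intro h; replace h := mk_eq_zero.mp h; rw [habc] at h; exact nomatch h
    · intro h; replace h := mk_eq_one.mp h; rw [habc] at h; exact nomatch h
    · have hn : (STerm.mul a.1 (STerm.mul b.1 c.1)).nested := Or.inr (Or.inl trivial)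
      exact habc ▸ hn
  · -- part (b)
    rintro ⟨-, -, s, hps, hns⟩
    rw [hps]
    have hs0 : s.1 ≠ STerm.zero := nested_ne_zero hns
    have hs1 : s.1 ≠ STerm.one := nested_ne_one hns
    have hadd : (stAdd s b).1 = STerm.add s.1 b.1 := stAdd_val s b hs0 hb0
    have hmul : (stMul s b).1 = STerm.mul s.1 b.1 := stMul_val s b hs0 hb0 hs1 hb1
    have hmul' : (stMul b s).1 = STerm.mul b.1 s.1 := stMul_val b s hb0 hs0 hb1 hs1
    refine ⟨⟨?_, ?_, stAdd s b, (sAdd_mk s b), ?_⟩,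
      ⟨?_, ?_, stMul s b, (sMul_mk s b), ?_⟩,
      ⟨?_, ?_, stMul b s, (sMul_mk b s), ?_⟩⟩
    · rw [sAdd_mk]; intro h; replace h := mk_eq_zero.mp h; rw [hadd] at h; exact nomatch h
    · rw [sAdd_mk]; intro h; replace h := mk_eq_one.mp h; rw [hadd] at h; exact nomatch h
    · exact hadd ▸ (Or.inl hns : (STerm.add s.1 b.1).nested)
    · rw [sMul_mk]; intro h; replace h := mk_eq_zero.mp h; rw [hmul] at h; exact nomatch h
    · rw [sMul_mk]; intro h; replace h := mk_eq_one.mp h; rw [hmul] at h; exact nomatch h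
    · exact hmul ▸ (Or.inr (Or.inr (Or.inl hns)) : (STerm.mul s.1 b.1).nested)
    · rw [sMul_mk]; intro h; replace h := mk_eq_zero.mp h; rw [hmul'] at h; exact nomatch h
    · rw [sMul_mk]; intro h; replace h := mk_eq_one.mp h; rw [hmul'] at h; exact nomatch h
    · exact hmul' ▸ (Or.inr (Or.inr (Or.inr hns)) : (STerm.mul b.1 s.1).nested)
end
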